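/- Let (F, G, φ, ψ) be a matrix factorization of a non-zerodivisor x ∈ S. Then the induced sequence F/xF → G/xG → F/xF obtained by reducing φ and ψ modulo x is exact at the middle term, i.e., the kernel of the reduction ψ̄ : G/xG → F/xF equals the image of the reduction φ̄ : F/xF → G/xG. -/

import Mathlib

/-- The submodule `xM` of an `S`-module `M`. -/
def xSub {S : Type*} [CommRing S] (x : S) (M : Type*) [AddCommGroup M] [Module S M] :
    Submodule S M :=
  Ideal.span {x} • (⊤ : Submodule S M)

/-- The map induced by an `S`-linear map `f : M → N` on the reductions `M/xM → N/xN`. -/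
def redMap {S : Type*} [CommRing S] (x : S) {M N : Type*} [AddCommGroup M] [Module S M]
    [AddCommGroup N] [Module S N] (f : M →ₗ[S] N) :
    (M ⧸ xSub x M) →ₗ[S] (N ⧸ xSub x N) :=
  Submodule.mapQ _ _ f (by
    rw [← Submodule.map_le_iff_le_comap, xSub, xSub, Submodule.map_smul'']
    exact Submodule.smul_mono le_rfl le_top)

lemma mem_xSub {S : Type*} [CommRing S] (x : S) {M : Type*} [AddCommGroup M] [Module S M]
    {m : M} : m ∈ xSub x M ↔ ∃ m' : M, x • m' = m := by
  rw [xSub, Submodule.ideal_span_singleton_smul]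
  constructor
  · intro h
    rw [← SetLike.mem_coe, Submodule.coe_pointwise_smul] at h
    obtain ⟨b, -, hb⟩ := Set.mem_smul_set.mp h
    exact ⟨b, hb⟩
  · rintro ⟨m', rfl⟩
    exact Submodule.smul_mem_pointwise_smul m' x ⊤ trivial

lemma redMap_mk {S : Type*} [CommRing S] (x : S) {M N : Type*} [AddCommGroup M] [Module S M]
    [AddCommGroup N] [Module S N] (f : M →ₗ[S] N) (m : M) :
    redMap x f ((xSub x M).mkQ m) = (xSub x N).mkQ (f m) :=
  Submodule.mapQ_apply _ _ _ _

lemma free_smul_eq_zero {S : Type*} [CommRing S] {x : S} (hx : x ∈ nonZeroDivisors S)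
    {G : Type*} [AddCommGroup G] [Module S G] [Module.Free S G] {v : G}
    (h : x • v = 0) : v = 0 := by
  let b := Module.Free.chooseBasis S G
  have hv : b.repr v = 0 := by
    ext i
    have h2 := congrArg (fun w => b.repr w i) h
    simp only [map_smul, Finsupp.smul_apply, smul_eq_mul, map_zero, Finsupp.zero_apply] at h2
    simpa using mem_nonZeroDivisors_iff_right.mp hx _ (by rwa [mul_comm] at h2)
  simpa using b.repr.map_eq_zero_iff.mp hv

theorem mf_reduction_exact_middle {S : Type*} [CommRing S] (x : S)
    (hx : x ∈ nonZeroDivisors S)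
    (F G : Type*) [AddCommGroup F] [Module S F] [AddCommGroup G] [Module S G]
    [Module.Free S F] [Module.Finite S F] [Module.Free S G] [Module.Finite S G]
    (φ : F →ₗ[S] G) (ψ : G →ₗ[S] F)
    (hψφ : ψ ∘ₗ φ = x • LinearMap.id) (hφψ : φ ∘ₗ ψ = x • LinearMap.id) :
    LinearMap.ker (redMap x ψ) = LinearMap.range (redMap x φ) := by
  ext y
  obtain ⟨g, rfl⟩ := Submodule.mkQ_surjective _ y
  simp only [LinearMap.mem_ker, LinearMap.mem_range]
  constructor
  · intro h
    have h1 : (xSub x F).mkQ (ψ g) = 0 := by rwa [redMap_mk] at h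
    rw [Submodule.mkQ_apply, Submodule.Quotient.mk_eq_zero] at h1
    obtain ⟨f, hf⟩ := mem_xSub x |>.mp h1
    have key : x • (g - φ f) = 0 := by
      have h2 : φ (ψ g) = x • g := by
        have := congrArg (fun t => t g) hφψ
        simpa using this
      have h3 : x • φ f = φ (ψ g) := by rw [← map_smul, hf]
      rw [smul_sub, h3, h2, sub_self]
    have hg : g = φ f := by
      have := free_smul_eq_zero hx key
      rwa [sub_eq_zero] at this
    exact ⟨(xSub x F).mkQ f, by rw [redMap_mk, hg]⟩
  · rintro ⟨z, hz⟩
    obtain ⟨f, rfl⟩ := Submodule.mkQ_surjective _ z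
    rw [← hz, redMap_mk, redMap_mk, Submodule.mkQ_apply, Submodule.Quotient.mk_eq_zero]
    have : ψ (φ f) = x • f := by
      have := congrArg (fun t => t f) hψφ
      simpa using this
    rw [this]
    exact (mem_xSub x).mpr ⟨f, rfl⟩
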